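/- Fix integers p ≥ 4 and q ≥ 3 with (p−2)(q−2) > 4, and set t = (p−2)(q−2)−2, α = (t+√(t²−4))/2. Define a(1)=p, b(1)=0 and, for k ≥ 2, a(k)=((p−3)(q−2)−1)·a(k−1)+((p−3)(q−3)−1)·b(k−1), b(k)=(q−2)·a(k−1)+(q−3)·b(k−1); then define v̌(k)=Σ_{j=1}^k (a(j)+b(j)), ě₁(k)=a(k)+b(k), ě₂(k)=(q−1)·Σ_{j=1}^{k−1} a(j)+(q−2)·Σ_{j=1}^{k−1} b(j), ě(k)=ě₁(k)+ě₂(k), and ň(k)=1−v̌(k)+ě(k). Then for all k ≥ 1: v̌(k) = (p/(t−2))·(α^k + α^{−k} − 2), ě(k) = (p/((α−1)·√(t²−4)))·((α+q−1)·α^k + (αq−α+1)·α^{−k} − q(α+1)), and ň(k) = 1 + (p(q−2)/((α−1)·√(t²−4)))·(α^k + α^{1−k} − α − 1). -/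

import Mathlib

open Finset

set_option maxHeartbeats 2000000

/-- Closed forms for the total vertex, edge, and tile counts of the complete
`k`-layered `{p,q}`-animal, `p ≥ 4`, `(p-2)(q-2) > 4` (hyperbolic case). -/
theorem hyperbolic_pq_layered_animal_parameters (p q : ℤ) (hp : 4 ≤ p) (hq : 3 ≤ q)
    (hpq : 4 < (p - 2) * (q - 2))
    (t α : ℝ) (ht : t = ((p : ℝ) - 2) * ((q : ℝ) - 2) - 2)
    (hα : α = (t + Real.sqrt (t ^ 2 - 4)) / 2)
    (a b v e₁ e₂ e n : ℕ → ℝ)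
    (ha1 : a 1 = (p : ℝ)) (hb1 : b 1 = 0)
    (ha : ∀ k, 2 ≤ k →
      a k = (((p : ℝ) - 3) * ((q : ℝ) - 2) - 1) * a (k - 1) +
        (((p : ℝ) - 3) * ((q : ℝ) - 3) - 1) * b (k - 1))
    (hb : ∀ k, 2 ≤ k →
      b k = ((q : ℝ) - 2) * a (k - 1) + ((q : ℝ) - 3) * b (k - 1))
    (hv : ∀ k, v k = ∑ j ∈ Icc 1 k, (a j + b j))
    (he₁ : ∀ k, e₁ k = a k + b k)
    (he₂ : ∀ k, e₂ k = ((q : ℝ) - 1) * ∑ j ∈ Icc 1 (k - 1), a j +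
      ((q : ℝ) - 2) * ∑ j ∈ Icc 1 (k - 1), b j)
    (he : ∀ k, e k = e₁ k + e₂ k)
    (hn : ∀ k, n k = 1 - v k + e k) :
    ∀ k : ℕ, 1 ≤ k →
      v k = (p : ℝ) / (t - 2) * (α ^ (k : ℤ) + α ^ (-(k : ℤ)) - 2) ∧
      e k = (p : ℝ) / ((α - 1) * Real.sqrt (t ^ 2 - 4)) *
        ((α + (q : ℝ) - 1) * α ^ (k : ℤ) + (α * (q : ℝ) - α + 1) * α ^ (-(k : ℤ)) -
          (q : ℝ) * (α + 1)) ∧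
      n k = 1 + (p : ℝ) * ((q : ℝ) - 2) / ((α - 1) * Real.sqrt (t ^ 2 - 4)) *
        (α ^ (k : ℤ) + α ^ (1 - (k : ℤ)) - α - 1) := by
  have hq2 : ((q : ℝ)) - 2 ≠ 0 := by
    have : (3 : ℝ) ≤ (q : ℝ) := by exact_mod_cast hq
    linarith
  have ht2 : 2 < t := by
    have h4 : (4 : ℝ) < ((p : ℝ) - 2) * ((q : ℝ) - 2) := by exact_mod_cast hpq
    rw [ht]; linarith
  have htD : 0 < t ^ 2 - 4 := by nlinarith
  set D := Real.sqrt (t ^ 2 - 4) with hDdef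
  have hD2 : D ^ 2 = t ^ 2 - 4 := Real.sq_sqrt (le_of_lt htD)
  have hDpos : 0 < D := Real.sqrt_pos.mpr htD
  clear_value D
  have hα1 : 1 < α := by rw [hα]; linarith
  have hα0 : α ≠ 0 := by linarith
  have hαne1 : α - 1 ≠ 0 := by linarith
  have hrel : α ^ 2 = t * α - 1 := by rw [hα]; linear_combination hD2 / 4
  have htα : t = α + α⁻¹ := by
    field_simp
    linear_combination -hrel
  have hDval : D = α - α⁻¹ := by
    have h1 : D * α = α ^ 2 - 1 := by
      rw [hα]; linear_combination hD2 / 4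
    field_simp
    linear_combination h1
  have hDne : D ≠ 0 := ne_of_gt hDpos
  have hp3 : (p : ℝ) - 3 = (α + α⁻¹ - (q : ℝ) + 4) / ((q : ℝ) - 2) := by
    rw [← htα]
    field_simp
    linear_combination -ht
  have hDα : D * α = α ^ 2 - 1 := by
    rw [hα]; linear_combination hD2 / 4
  have hc1 : ((p : ℝ) - 3) * ((q : ℝ) - 2) - 1 = α + α⁻¹ - (q : ℝ) + 3 := by
    rw [← htα, ht]; ring
  have hc2 : ((p : ℝ) - 3) * ((q : ℝ) - 3) - 1 =
      (α + α⁻¹ - (q : ℝ) + 4) / ((q : ℝ) - 2) * ((q : ℝ) - 3) - 1 := by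
    rw [← hp3]
  have key : ∀ k : ℕ, 1 ≤ k →
      a k = (p : ℝ) / D * ((α - (q : ℝ) + 3) / α * α ^ (k : ℤ) +
        (((q : ℝ) - 3) * α - 1) / α ^ (k : ℤ)) ∧
      b k = ((q : ℝ) - 2) * (p : ℝ) / D * (α ^ (k : ℤ) / α - α / α ^ (k : ℤ)) := by
    intro k hk
    induction k, hk using Nat.le_induction with
    | base =>
      simp only [Nat.cast_one, zpow_one]
      constructor
      · rw [ha1]
        field_simp
        linear_combination hDα
      · rw [hb1]
        field_simp
        ring
    | succ m hm ih =>
      obtain ⟨iha, ihb⟩ := ih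
      have hX0 : α ^ (m : ℤ) ≠ 0 := zpow_ne_zero _ hα0
      have hz : α ^ ((m + 1 : ℕ) : ℤ) = α ^ (m : ℤ) * α := by
        push_cast; rw [zpow_add_one₀ hα0]
      have h2 : 2 ≤ m + 1 := by omega
      have hsub : m + 1 - 1 = m := rfl
      constructor
      · rw [ha _ h2, hsub, iha, ihb, hz, hc1, hc2]
        field_simp
        ring
      · rw [hb _ h2, hsub, iha, ihb, hz]
        field_simp
        ring
  have sum1 : ∀ k : ℕ, ∑ j ∈ Icc 1 k, α ^ (j : ℤ) = α * (α ^ (k : ℤ) - 1) / (α - 1) := by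
    intro k
    induction k with
    | zero => simp
    | succ m ih =>
      rw [Finset.sum_Icc_succ_top (by omega : 1 ≤ m + 1), ih]
      have hz : α ^ ((m + 1 : ℕ) : ℤ) = α ^ (m : ℤ) * α := by
        push_cast; rw [zpow_add_one₀ hα0]
      rw [hz]
      field_simp
      ring
  have sum2 : ∀ k : ℕ, ∑ j ∈ Icc 1 k, (α ^ (j : ℤ))⁻¹ = (1 - (α ^ (k : ℤ))⁻¹) / (α - 1) := by
    intro k
    induction k with
    | zero => simp
    | succ m ih =>
      rw [Finset.sum_Icc_succ_top (by omega : 1 ≤ m + 1), ih]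
      have hz : α ^ ((m + 1 : ℕ) : ℤ) = α ^ (m : ℤ) * α := by
        push_cast; rw [zpow_add_one₀ hα0]
      have hX0 : α ^ (m : ℤ) ≠ 0 := zpow_ne_zero _ hα0
      rw [hz]
      field_simp
      ring
  have Sa : ∀ k : ℕ, ∑ j ∈ Icc 1 k, a j =
      (p : ℝ) / D * ((α - (q : ℝ) + 3) / α * (α * (α ^ (k : ℤ) - 1) / (α - 1)) +
        (((q : ℝ) - 3) * α - 1) * ((1 - (α ^ (k : ℤ))⁻¹) / (α - 1))) := by
    intro k
    rw [← sum1 k, ← sum2 k, Finset.mul_sum, Finset.mul_sum, ← Finset.sum_add_distrib,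
      Finset.mul_sum]
    refine Finset.sum_congr rfl fun j hj => ?_
    rw [(key j (mem_Icc.mp hj).1).1]
    ring
  have Sb : ∀ k : ℕ, ∑ j ∈ Icc 1 k, b j =
      ((q : ℝ) - 2) * (p : ℝ) / D * ((α * (α ^ (k : ℤ) - 1) / (α - 1)) / α -
        α * ((1 - (α ^ (k : ℤ))⁻¹) / (α - 1))) := by
    intro k
    have h1 : (α * (α ^ (k : ℤ) - 1) / (α - 1)) / α - α * ((1 - (α ^ (k : ℤ))⁻¹) / (α - 1)) =
        (1 / α) * (α * (α ^ (k : ℤ) - 1) / (α - 1)) +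
        (-α) * ((1 - (α ^ (k : ℤ))⁻¹) / (α - 1)) := by ring
    rw [h1, ← sum1 k, ← sum2 k, Finset.mul_sum, Finset.mul_sum, ← Finset.sum_add_distrib,
      Finset.mul_sum]
    refine Finset.sum_congr rfl fun j hj => ?_
    rw [(key j (mem_Icc.mp hj).1).2]
    ring
  have hα21 : α ^ 2 - 1 ≠ 0 := by nlinarith
  have hDeq : D = (α ^ 2 - 1) / α := by
    rw [eq_div_iff hα0]; linear_combination hDα
  have hfac : t - 2 = (α - 1) ^ 2 / α := by
    rw [eq_div_iff hα0]; linear_combination -hrel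
  intro k hk
  have hX0 : α ^ (k : ℤ) ≠ 0 := zpow_ne_zero _ hα0
  have hkm : ((k - 1 : ℕ) : ℤ) = (k : ℤ) - 1 := by omega
  have hXm : α ^ ((k - 1 : ℕ) : ℤ) = α ^ (k : ℤ) * α⁻¹ := by
    rw [hkm, zpow_sub₀ hα0, zpow_one, div_eq_mul_inv]
  have hneg : α ^ (-(k : ℤ)) = (α ^ (k : ℤ))⁻¹ := zpow_neg α _
  have h1k : α ^ (1 - (k : ℤ)) = α * (α ^ (k : ℤ))⁻¹ := by
    rw [zpow_sub₀ hα0, zpow_one, div_eq_mul_inv]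
  have hv' : v k = (p : ℝ) / (t - 2) * (α ^ (k : ℤ) + α ^ (-(k : ℤ)) - 2) := by
    rw [hv, Finset.sum_add_distrib, Sa, Sb, hneg, hDeq, hfac]
    field_simp
    ring
  have he' : e k = (p : ℝ) / ((α - 1) * D) *
      ((α + (q : ℝ) - 1) * α ^ (k : ℤ) + (α * (q : ℝ) - α + 1) * α ^ (-(k : ℤ)) -
        (q : ℝ) * (α + 1)) := by
    rw [he, he₁, (key k hk).1, (key k hk).2, he₂ k, Sa, Sb, hXm, hneg, hDeq]
    field_simp
    ring
  refine ⟨hv', ?_, ?_⟩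
  · rw [he', hDdef]
  · rw [hn, hv', he', hneg, h1k, hfac, hDeq]
    field_simp
    ring
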